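/- For every noncrossing partition P of [n] and every i, the partition κ^{2i}(P) is the rotation of P by i: j belongs to a block B of P if and only if j - i (mod n) belongs to the corresponding block of κ^{2i}(P). -/

import Mathlib

/-- A partition of `{1,…,n}` (as `Fin n`) is noncrossing if there are no
`a < b < c < d` with `a, c` in one block and `b, d` in a different block. -/
def IsNoncrossing {n : ℕ} (P : Finpartition (Finset.univ : Finset (Fin n))) : Prop :=
  ¬ ∃ a b c d : Fin n, a < b ∧ b < c ∧ c < d ∧
    P.part a = P.part c ∧ P.part b = P.part d ∧ P.part a ≠ P.part b

/-- The set `NC(n)` of noncrossing partitions of `{1,…,n}`. -/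
abbrev NCP (n : ℕ) := {P : Finpartition (Finset.univ : Finset (Fin n)) // IsNoncrossing P}

/-- In the interleaved order `1 < 1' < 2 < 2' < … < n < n'` (element `i` of the
first copy sits at position `2i`, of the second copy at position `2i+1`),
positions `x` and `y` lie in the same block of the union `P ∪ Q`, where `P`
lives on the first copy and `Q` on the second. -/
def JointSame {n : ℕ} (P Q : Finpartition (Finset.univ : Finset (Fin n))) (x y : ℕ) : Prop :=
  ∃ i j : Fin n,
    (x = 2 * i.val ∧ y = 2 * j.val ∧ P.part i = P.part j) ∨
    (x = 2 * i.val + 1 ∧ y = 2 * j.val + 1 ∧ Q.part i = Q.part j)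

/-- `P ∪ Q` is a noncrossing partition of the interleaved totally ordered set. -/
def JointNoncrossing {n : ℕ} (P Q : Finpartition (Finset.univ : Finset (Fin n))) : Prop :=
  ¬ ∃ a b c d : ℕ, a < b ∧ b < c ∧ c < d ∧
    JointSame P Q a c ∧ JointSame P Q b d ∧ ¬ JointSame P Q a b

/-- `k` is the Kreweras complementation map on `NC(n)`: `k P` is the coarsest
noncrossing partition on the second copy of `{1,…,n}` such that `P ∪ k P` is
noncrossing on the interleaved set. -/
def IsKreweras {n : ℕ} (k : NCP n → NCP n) : Prop :=
  ∀ P : NCP n, JointNoncrossing P.1 (k P).1 ∧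
    ∀ Q : NCP n, JointNoncrossing P.1 Q.1 → Q.1 ≤ (k P).1

namespace KrewerasAux

open Finset

variable {n : ℕ}

/-- No block of `P` crosses the interval `(a, b]`. -/
def S (P : Finpartition (Finset.univ : Finset (Fin n))) (a b : Fin n) : Prop :=
  ∀ u v : Fin n, a < u → u ≤ b → (v ≤ a ∨ b < v) → P.part u ≠ P.part v

/-- Symmetrized version of `S`. -/
def Ssym (P : Finpartition (Finset.univ : Finset (Fin n))) (a b : Fin n) : Prop :=
  S P (min a b) (max a b)

lemma ssym_of_le {P : Finpartition (Finset.univ : Finset (Fin n))} {a b : Fin n} (h : a ≤ b) :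
    Ssym P a b ↔ S P a b := by
  unfold Ssym
  rw [min_eq_left h, max_eq_right h]

lemma ssym_comm {P : Finpartition (Finset.univ : Finset (Fin n))} {a b : Fin n} :
    Ssym P a b ↔ Ssym P b a := by
  unfold Ssym
  rw [min_comm, max_comm]

lemma ssym_refl (P : Finpartition (Finset.univ : Finset (Fin n))) (a : Fin n) : Ssym P a a := by
  intro u v hu1 hu2 _ _
  simp only [min_self, max_self] at *
  exact absurd (lt_of_lt_of_le hu1 hu2) (lt_irrefl _)

/-- Unfolded noncrossing property. -/
lemma cross {P : Finpartition (Finset.univ : Finset (Fin n))} (hP : IsNoncrossing P)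
    {a b c d : Fin n} (h1 : a < b) (h2 : b < c) (h3 : c < d)
    (hac : P.part a = P.part c) (hbd : P.part b = P.part d) : P.part a = P.part b := by
  by_contra h
  exact hP ⟨a, b, c, d, h1, h2, h3, hac, hbd, h⟩

/-- The "interleaving" transitivity-type lemma : if `a ≤ b ≤ c ≤ d` with
`S a c` and `S b d`, then `S a b`.  -/
lemma S_interleave {P : Finpartition (Finset.univ : Finset (Fin n))} {a b c d : Fin n}
    (hab : a ≤ b) (hbc : b ≤ c) (hcd : c ≤ d) (h1 : S P a c) (h2 : S P b d) : S P a b := by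
  intro u v hu1 hu2 hv heq
  rcases hv with hv | hv
  · exact h1 u v hu1 (le_trans hu2 hbc) (Or.inl hv) heq
  · by_cases hvc : c < v
    · exact h1 u v hu1 (le_trans hu2 hbc) (Or.inr hvc) heq
    · push_neg at hvc
      exact h2 v u hv (hvc.trans hcd) (Or.inl (hu2)) heq.symm

lemma S_trans1 {P : Finpartition (Finset.univ : Finset (Fin n))} {a b c : Fin n}
    (hab : a ≤ b) (_hbc : b ≤ c) (h1 : S P a b) (h2 : S P b c) : S P a c := by
  intro u v hu1 hu2 hv heq
  by_cases hub : u ≤ b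
  · refine h1 u v hu1 hub ?_ heq
    rcases hv with hv | hv
    · exact Or.inl hv
    · exact Or.inr (lt_of_le_of_lt _hbc hv)
  · push_neg at hub
    refine h2 u v hub hu2 ?_ heq
    rcases hv with hv | hv
    · exact Or.inl (le_trans hv hab)
    · exact Or.inr hv

lemma S_trans2 {P : Finpartition (Finset.univ : Finset (Fin n))} {a b c : Fin n}
    (hab : a ≤ b) (_hbc : b ≤ c) (h1 : S P a b) (h2 : S P a c) : S P b c := by
  intro u v hu1 hu2 hv heq
  rcases hv with hv | hv
  · by_cases hva : v ≤ a
    · exact h2 u v (lt_of_le_of_lt hab hu1) hu2 (Or.inl hva) heq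
    · push_neg at hva
      exact h1 v u hva hv (Or.inr hu1) heq.symm
  · exact h2 u v (lt_of_le_of_lt hab hu1) hu2 (Or.inr hv) heq

lemma S_trans3 {P : Finpartition (Finset.univ : Finset (Fin n))} {a b c : Fin n}
    (hab : a ≤ b) (hbc : b ≤ c) (h1 : S P b c) (h2 : S P a c) : S P a b := by
  intro u v hu1 hu2 hv heq
  rcases hv with hv | hv
  · exact h2 u v hu1 (le_trans hu2 hbc) (Or.inl hv) heq
  · by_cases hvc : c < v
    · exact h2 u v hu1 (le_trans hu2 hbc) (Or.inr hvc) heq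
    · push_neg at hvc
      exact h1 v u hv hvc (Or.inl hu2) heq.symm

lemma ssym_trans {P : Finpartition (Finset.univ : Finset (Fin n))} {a b c : Fin n}
    (h1 : Ssym P a b) (h2 : Ssym P b c) : Ssym P a c := by
  rcases le_total a b with hab | hab <;> rcases le_total b c with hbc | hbc <;>
    rcases le_total a c with hac | hac
  · rw [ssym_of_le hab] at h1; rw [ssym_of_le hbc] at h2; rw [ssym_of_le hac]
    exact S_trans1 hab hbc h1 h2
  · have : a = c := le_antisymm (le_trans hab hbc) hac
    rw [this]; exact KrewerasAux.ssym_refl P c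
  · -- a ≤ b, c ≤ b, a ≤ c : Ssym b c = S c b
    rw [ssym_of_le hab] at h1
    rw [ssym_comm, ssym_of_le hbc] at h2
    rw [ssym_of_le hac]
    exact S_trans3 hac hbc h2 h1
  · -- a ≤ b, c ≤ b, c ≤ a : S a b, S c b ⊢ S c a
    rw [ssym_of_le hab] at h1
    rw [ssym_comm, ssym_of_le hbc] at h2
    rw [ssym_comm, ssym_of_le hac]
    exact S_trans3 hac hab h1 h2
  · -- b ≤ a, b ≤ c, a ≤ c : S b a, S b c ⊢ S a c
    rw [ssym_comm, ssym_of_le hab] at h1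
    rw [ssym_of_le hbc] at h2
    rw [ssym_of_le hac]
    exact S_trans2 hab hac h1 h2
  · -- b ≤ a, b ≤ c, c ≤ a : S b a, S b c ⊢ S c a
    rw [ssym_comm, ssym_of_le hab] at h1
    rw [ssym_of_le hbc] at h2
    rw [ssym_comm, ssym_of_le hac]
    exact S_trans2 hbc hac h2 h1
  · have : a = c := le_antisymm hac (le_trans hbc hab)
    rw [this]; exact KrewerasAux.ssym_refl P c
  · -- b ≤ a, c ≤ b, c ≤ a : S b a, S c b ⊢ S c a
    rw [ssym_comm, ssym_of_le hab] at h1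
    rw [ssym_comm, ssym_of_le hbc] at h2
    rw [ssym_comm, ssym_of_le hac]
    exact S_trans1 hbc hab h2 h1


section Joint

variable {P Q : Finpartition (Finset.univ : Finset (Fin n))}

lemma js_parity {x y : ℕ} (h : JointSame P Q x y) : x % 2 = y % 2 := by
  obtain ⟨i, j, h | h⟩ := h <;> omega

lemma js_even {a b : Fin n} : JointSame P Q (2 * a.val) (2 * b.val) ↔ P.part a = P.part b := by
  constructor
  · rintro ⟨i, j, ⟨hx, hy, h⟩ | ⟨hx, hy, h⟩⟩
    · have : a = i := Fin.ext (by omega)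
      have hbj : b = j := Fin.ext (by omega)
      rw [this, hbj]; exact h
    · omega
  · intro h; exact ⟨a, b, Or.inl ⟨rfl, rfl, h⟩⟩

lemma js_odd {a b : Fin n} :
    JointSame P Q (2 * a.val + 1) (2 * b.val + 1) ↔ Q.part a = Q.part b := by
  constructor
  · rintro ⟨i, j, ⟨hx, hy, h⟩ | ⟨hx, hy, h⟩⟩
    · omega
    · have : a = i := Fin.ext (by omega)
      have hbj : b = j := Fin.ext (by omega)
      rw [this, hbj]; exact h
  · intro h; exact ⟨a, b, Or.inr ⟨rfl, rfl, h⟩⟩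

end Joint

/-- Forward direction of the characterization of the Kreweras complement:
if `a, b` lie in the same block of `k P`, no block of `P` crosses `(a,b]`. -/
lemma kchar_mp {k : NCP n → NCP n} (hk : IsKreweras k) (P : NCP n) {a b : Fin n}
    (hab : a ≤ b) (h : (k P).1.part a = (k P).1.part b) : S P.1 a b := by
  intro u v hu1 hu2 hv heq
  have hJN : JointNoncrossing P.1 (k P).1 := (hk P).1
  rcases hv with hv | hv
  · refine hJN ⟨2 * v.val, 2 * a.val + 1, 2 * u.val, 2 * b.val + 1, ?_, ?_, ?_, ?_, ?_, ?_⟩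
    · have : v.val ≤ a.val := hv; omega
    · have : a.val < u.val := hu1; omega
    · have : u.val ≤ b.val := hu2; omega
    · exact js_even.2 heq.symm
    · exact js_odd.2 h
    · intro hj; have := js_parity hj; omega
  · refine hJN ⟨2 * a.val + 1, 2 * u.val, 2 * b.val + 1, 2 * v.val, ?_, ?_, ?_, ?_, ?_, ?_⟩
    · have : a.val < u.val := hu1; omega
    · have : u.val ≤ b.val := hu2; omega
    · have : b.val < v.val := hv; omega
    · exact js_odd.2 h
    · exact js_even.2 heq
    · intro hj; have := js_parity hj; omega


/-- The setoid of the symmetrized interval relation. -/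
def krewSetoid (P : Finpartition (Finset.univ : Finset (Fin n))) : Setoid (Fin n) :=
  ⟨Ssym P, ⟨ssym_refl P, fun h => ssym_comm.mp h, ssym_trans⟩⟩

/-- Candidate Kreweras complement, as a finpartition. -/
noncomputable def QS (P : Finpartition (Finset.univ : Finset (Fin n))) :
    Finpartition (Finset.univ : Finset (Fin n)) :=
  letI : DecidableRel (krewSetoid P).r := Classical.decRel _
  Finpartition.ofSetoid (krewSetoid P)

lemma QS_part_eq_iff {P : Finpartition (Finset.univ : Finset (Fin n))} {a b : Fin n} :
    (QS P).part a = (QS P).part b ↔ Ssym P a b := by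
  have key : ∀ x y : Fin n, y ∈ (QS P).part x ↔ Ssym P x y := by
    intro x y
    letI : DecidableRel (krewSetoid P).r := Classical.decRel _
    exact Finpartition.mem_part_ofSetoid_iff_rel
  constructor
  · intro h
    exact (key a b).1 (h.symm ▸ (QS P).mem_part (Finset.mem_univ b))
  · intro h
    exact ((QS P).part_eq_of_mem ((QS P).part_mem.2 (Finset.mem_univ a)) ((key a b).2 h)).symm

lemma QS_nc (P : Finpartition (Finset.univ : Finset (Fin n))) : IsNoncrossing (QS P) := by
  rintro ⟨a, b, c, d, h1, h2, h3, hac, hbd, hnab⟩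
  simp only [ne_eq, QS_part_eq_iff] at hac hbd hnab
  refine hnab ((ssym_of_le h1.le).2 ?_)
  exact S_interleave h1.le h2.le h3.le ((ssym_of_le (h1.trans h2).le).1 hac)
    ((ssym_of_le (h2.trans h3).le).1 hbd)

lemma jn_QS (P : NCP n) : JointNoncrossing P.1 (QS P.1) := by
  rintro ⟨a, b, c, d, h1, h2, h3, hac, hbd, hnab⟩
  obtain ⟨i, j, hij⟩ := hac
  obtain ⟨i', j', hij'⟩ := hbd
  rcases hij with ⟨ha, hc, hPij⟩ | ⟨ha, hc, hQij⟩ <;>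
    rcases hij' with ⟨hb, hd, hPij'⟩ | ⟨hb, hd, hQij'⟩
  · -- both pairs in `P`
    have hii' : i < i' := by rw [Fin.lt_def]; omega
    have hi'j : i' < j := by rw [Fin.lt_def]; omega
    have hjj' : j < j' := by rw [Fin.lt_def]; omega
    have : P.1.part i ≠ P.1.part i' := by
      intro h; exact hnab (ha ▸ hb ▸ js_even.2 h)
    exact this (cross P.2 hii' hi'j hjj' hPij hPij')
  · -- `(a,c)` in `P`, `(b,d)` in `QS`
    rw [QS_part_eq_iff] at hQij'
    have hle : i ≤ i' := by rw [Fin.le_def]; omega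
    have h1' : i' < j := by rw [Fin.lt_def]; omega
    have h2' : j ≤ j' := by rw [Fin.le_def]; omega
    exact (ssym_of_le (h1'.le.trans h2')).1 hQij' j i h1' h2' (Or.inl hle) hPij.symm
  · -- `(a,c)` in `QS`, `(b,d)` in `P`
    rw [QS_part_eq_iff] at hQij
    have h1' : i < i' := by rw [Fin.lt_def]; omega
    have h2' : i' ≤ j := by rw [Fin.le_def]; omega
    have h3' : j < j' := by rw [Fin.lt_def]; omega
    exact (ssym_of_le (h1'.le.trans h2')).1 hQij i' j' h1' h2' (Or.inr h3') hPij'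
  · -- both pairs in `QS`
    rw [QS_part_eq_iff] at hQij hQij'
    have hii' : i < i' := by rw [Fin.lt_def]; omega
    have hi'j : i' < j := by rw [Fin.lt_def]; omega
    have hjj' : j < j' := by rw [Fin.lt_def]; omega
    refine hnab (ha ▸ hb ▸ js_odd.2 (QS_part_eq_iff.2 ((ssym_of_le hii'.le).2 ?_)))
    exact S_interleave hii'.le hi'j.le hjj'.le ((ssym_of_le (hii'.trans hi'j).le).1 hQij)
      ((ssym_of_le (hi'j.trans hjj').le).1 hQij')

lemma part_eq_of_le {R R' : Finpartition (Finset.univ : Finset (Fin n))} (h : R ≤ R')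
    {a b : Fin n} (hab : R.part a = R.part b) : R'.part a = R'.part b := by
  obtain ⟨c, hc, hsub⟩ := h (R.part_mem.2 (Finset.mem_univ a))
  have hac : a ∈ c := hsub (R.mem_part (Finset.mem_univ a))
  have hbc : b ∈ c := hsub (hab ▸ R.mem_part (Finset.mem_univ b))
  rw [R'.part_eq_of_mem hc hac, R'.part_eq_of_mem hc hbc]

lemma kchar {k : NCP n → NCP n} (hk : IsKreweras k) (P : NCP n) {a b : Fin n} :
    (k P).1.part a = (k P).1.part b ↔ Ssym P.1 a b := by
  constructor
  · intro h
    rcases le_total a b with hab | hab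
    · exact (ssym_of_le hab).2 (kchar_mp hk P hab h)
    · exact ssym_comm.2 ((ssym_of_le hab).2 (kchar_mp hk P hab h.symm))
  · intro h
    have hle : (QS P.1) ≤ (k P).1 := (hk P).2 ⟨QS P.1, QS_nc P.1⟩ (jn_QS P)
    exact part_eq_of_le hle (QS_part_eq_iff.2 h)


section Main

variable {P : Finpartition (Finset.univ : Finset (Fin n))}

@[simp] lemma valmk {x : ℕ} (h : x < n) : ((⟨x, h⟩ : Fin n) : ℕ) = x := rfl

/-- If `e < f` are two members of the block of `c` with no member of that block strictly
between them, then no block crosses the interval `(e, f-1]`. -/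
lemma between (hP : IsNoncrossing P) {c e f : Fin n}
    (he : P.part e = P.part c) (hf : P.part f = P.part c) (hef : e < f)
    (hno : ∀ w : Fin n, e < w → w < f → P.part w ≠ P.part c) :
    S P e ⟨f.val - 1, by omega⟩ := by
  have hef' : e.val < f.val := hef
  intro u v hu1 hu2 hv heq
  have hu2' : u.val ≤ f.val - 1 := hu2
  have huf : u < f := by rw [Fin.lt_def]; omega
  have hune : P.part u ≠ P.part c := hno u hu1 huf
  rcases hv with hv | hv
  · rcases lt_or_eq_of_le hv with hv' | rfl
    · have h2 : P.part v = P.part e := cross hP hv' hu1 huf heq.symm (he.trans hf.symm)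
      exact hune (heq.trans (h2.trans he))
    · exact hune (heq.trans he)
  · have hv' : f.val - 1 < v.val := hv
    have hfv : f ≤ v := by rw [Fin.le_def]; omega
    rcases lt_or_eq_of_le hfv with hv'' | rfl
    · have h2 : P.part e = P.part u := cross hP hu1 huf hv'' (he.trans hf.symm) heq
      exact hune (h2.symm.trans he)
    · exact hune (heq.trans hf)

/-- If `m` and `M` are the smallest and largest members of the block of `c`, and `1 ≤ m`,
then no block crosses `(m-1, M]`. -/
lemma low (hP : IsNoncrossing P) {c m M : Fin n}
    (hm : P.part m = P.part c) (hM : P.part M = P.part c)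
    (hmin : ∀ w : Fin n, P.part w = P.part c → m ≤ w)
    (hmax : ∀ w : Fin n, P.part w = P.part c → w ≤ M)
    (h1 : 1 ≤ m.val) :
    S P ⟨m.val - 1, by omega⟩ M := by
  intro u v hu1 hu2 hv heq
  have hu1' : m.val - 1 < u.val := hu1
  have hum : m ≤ u := by rw [Fin.le_def]; omega
  by_cases hu : P.part u = P.part c
  · have hvc : P.part v = P.part c := heq.symm.trans hu
    rcases hv with hv | hv
    · have h2 : m.val ≤ v.val := hmin v hvc
      have hv' : v.val ≤ m.val - 1 := hv
      omega
    · exact absurd (hmax v hvc) (not_le.2 hv)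
  · have hum' : m < u := lt_of_le_of_ne hum (fun h => hu (h ▸ hm))
    have huM : u < M := lt_of_le_of_ne hu2 (fun h => hu (h ▸ hM))
    rcases hv with hv | hv
    · have hv' : v.val ≤ m.val - 1 := hv
      have hvm : v < m := by rw [Fin.lt_def]; omega
      have h2 : P.part v = P.part m := cross hP hvm hum' huM heq.symm (hm.trans hM.symm)
      exact hu (heq.trans (h2.trans hm))
    · have h2 : P.part m = P.part u := cross hP hum' huM hv (hm.trans hM.symm) heq
      exact hu (h2.symm.trans hm)

/-- Main combinatorial lemma, non-wrapping case: if no `Ssym P`-related pair crosses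
`(a, b]`, then `a+1` and `b+1` are in the same block of `P`. -/
lemma main1 (hP : IsNoncrossing P) {a b : Fin n} (hab : a < b) (hb1 : b.val + 1 < n)
    (H : ∀ u v : Fin n, a < u → u ≤ b → (v ≤ a ∨ b < v) → ¬ Ssym P u v) :
    P.part ⟨a.val + 1, by have := Fin.lt_def.mp hab; omega⟩ = P.part ⟨b.val + 1, hb1⟩ := by
  have hab' : a.val < b.val := hab
  set c : Fin n := ⟨b.val + 1, hb1⟩ with hc
  have hcval : c.val = b.val + 1 := rfl
  by_contra hne
  have hac : a < c := by rw [Fin.lt_def, hcval]; omega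
  set F : Finset (Fin n) :=
    Finset.univ.filter (fun w : Fin n => P.part w = P.part c ∧ a < w) with hF
  have hcF : c ∈ F := by
    rw [hF, Finset.mem_filter]
    exact ⟨Finset.mem_univ _, rfl, hac⟩
  have hFne : F.Nonempty := ⟨c, hcF⟩
  set f : Fin n := F.min' hFne with hfdef
  have hfF : P.part f = P.part c ∧ a < f := by
    have := Finset.mem_filter.mp (F.min'_mem hFne)
    exact this.2
  have hfc : f.val ≤ b.val + 1 := F.min'_le c hcF
  have hfa1 : a.val + 1 < f.val := by
    have h1 : a.val < f.val := hfF.2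
    rcases Nat.lt_or_ge (a.val + 1) f.val with h | h
    · exact h
    · exfalso
      apply hne
      have hfeq : (⟨a.val + 1, by omega⟩ : Fin n) = f := Fin.ext (by simp; omega)
      rw [hfeq]
      exact hfF.1
  by_cases hE : (Finset.univ.filter (fun w : Fin n => P.part w = P.part c ∧ w ≤ a)).Nonempty
  · set E := Finset.univ.filter (fun w : Fin n => P.part w = P.part c ∧ w ≤ a) with hEdef
    set e : Fin n := E.max' hE with hedef
    have heE : P.part e = P.part c ∧ e ≤ a := by
      have := Finset.mem_filter.mp (E.max'_mem hE)
      exact this.2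
    have hea : e.val ≤ a.val := heE.2
    have hef : e < f := lt_of_le_of_lt heE.2 hfF.2
    have hno : ∀ w : Fin n, e < w → w < f → P.part w ≠ P.part c := by
      intro w h1 h2 hwc
      rcases le_or_gt w a with hwa | hwa
      · have : w ≤ e := E.le_max' w (Finset.mem_filter.mpr ⟨Finset.mem_univ _, hwc, hwa⟩)
        exact absurd this (not_le.2 h1)
      · have : f ≤ w := F.min'_le w (Finset.mem_filter.mpr ⟨Finset.mem_univ _, hwc, hwa⟩)
        exact absurd this (not_le.2 h2)
    have hS : S P e ⟨f.val - 1, by omega⟩ := between hP heE.1 hfF.1 hef hno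
    refine H ⟨f.val - 1, by omega⟩ e ?_ ?_ (Or.inl heE.2) ?_
    · rw [Fin.lt_def]; simp; omega
    · rw [Fin.le_def]; simp; omega
    · rw [ssym_comm, ssym_of_le (by rw [Fin.le_def]; simp; omega)]
      exact hS
  · have hmin' : ∀ w : Fin n, P.part w = P.part c → f ≤ w := by
      intro w hw
      rcases le_or_gt w a with hwa | hwa
      · exact absurd ⟨w, Finset.mem_filter.mpr ⟨Finset.mem_univ _, hw, hwa⟩⟩ hE
      · exact F.min'_le w (Finset.mem_filter.mpr ⟨Finset.mem_univ _, hw, hwa⟩)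
    have hDne : (Finset.univ.filter (fun w : Fin n => P.part w = P.part c)).Nonempty :=
      ⟨c, Finset.mem_filter.mpr ⟨Finset.mem_univ _, rfl⟩⟩
    set M : Fin n := (Finset.univ.filter (fun w : Fin n => P.part w = P.part c)).max' hDne
      with hMdef
    have hM : P.part M = P.part c :=
      (Finset.mem_filter.mp (Finset.max'_mem _ hDne)).2
    have hmax : ∀ w : Fin n, P.part w = P.part c → w ≤ M := fun w hw =>
      Finset.le_max' _ w (Finset.mem_filter.mpr ⟨Finset.mem_univ _, hw⟩)
    have hcM : c.val ≤ M.val := hmax c rfl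
    have hS : S P ⟨f.val - 1, by omega⟩ M := low hP hfF.1 hM hmin' hmax (by omega)
    refine H ⟨f.val - 1, by omega⟩ M ?_ ?_ (Or.inr ?_) ?_
    · rw [Fin.lt_def]; simp; omega
    · rw [Fin.le_def]; simp; omega
    · rw [Fin.lt_def]; omega
    · rw [ssym_of_le (by rw [Fin.le_def]; simp; omega)]
      exact hS

/-- Main combinatorial lemma, wrapping case. -/
lemma main2 (hP : IsNoncrossing P) {a b : Fin n} (hab : a < b) (hb1 : b.val = n - 1)
    (H : ∀ u v : Fin n, a < u → u ≤ b → (v ≤ a ∨ b < v) → ¬ Ssym P u v) :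
    P.part ⟨a.val + 1, by have h1 := Fin.lt_def.mp hab; have h2 := b.isLt; omega⟩ =
      P.part ⟨0, by have := b.isLt; omega⟩ := by
  have hab' : a.val < b.val := hab
  have hnb := b.isLt
  by_contra hne
  set z : Fin n := ⟨0, by omega⟩ with hz
  have hzval : z.val = 0 := rfl
  by_cases hF : (Finset.univ.filter (fun w : Fin n => P.part w = P.part z ∧ a < w)).Nonempty
  · set F := Finset.univ.filter (fun w : Fin n => P.part w = P.part z ∧ a < w) with hFdef
    set f : Fin n := F.min' hF with hfdef
    have hfF : P.part f = P.part z ∧ a < f := by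
      have := Finset.mem_filter.mp (F.min'_mem hF)
      exact this.2
    have hfa1 : a.val + 1 < f.val := by
      have h1 : a.val < f.val := hfF.2
      rcases Nat.lt_or_ge (a.val + 1) f.val with h | h
      · exact h
      · exfalso
        apply hne
        have hfeq : (⟨a.val + 1, by omega⟩ : Fin n) = f := Fin.ext (by simp; omega)
        rw [hfeq]
        exact hfF.1
    have hza : z ≤ a := by rw [Fin.le_def, hzval]; omega
    have hEne : (Finset.univ.filter (fun w : Fin n => P.part w = P.part z ∧ w ≤ a)).Nonempty :=
      ⟨z, Finset.mem_filter.mpr ⟨Finset.mem_univ _, rfl, hza⟩⟩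
    set E := Finset.univ.filter (fun w : Fin n => P.part w = P.part z ∧ w ≤ a) with hEdef
    set e : Fin n := E.max' hEne with hedef
    have heE : P.part e = P.part z ∧ e ≤ a := by
      have := Finset.mem_filter.mp (E.max'_mem hEne)
      exact this.2
    have hea : e.val ≤ a.val := heE.2
    have hef : e < f := lt_of_le_of_lt heE.2 hfF.2
    have hno : ∀ w : Fin n, e < w → w < f → P.part w ≠ P.part z := by
      intro w h1 h2 hwc
      rcases le_or_gt w a with hwa | hwa
      · have : w ≤ e := E.le_max' w (Finset.mem_filter.mpr ⟨Finset.mem_univ _, hwc, hwa⟩)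
        exact absurd this (not_le.2 h1)
      · have : f ≤ w := F.min'_le w (Finset.mem_filter.mpr ⟨Finset.mem_univ _, hwc, hwa⟩)
        exact absurd this (not_le.2 h2)
    have hS : S P e ⟨f.val - 1, by omega⟩ := between hP heE.1 hfF.1 hef hno
    have hfb : f.val ≤ n - 1 := by have := f.isLt; omega
    refine H ⟨f.val - 1, by omega⟩ e ?_ ?_ (Or.inl heE.2) ?_
    · rw [Fin.lt_def]; simp; omega
    · rw [Fin.le_def]; simp; omega
    · rw [ssym_comm, ssym_of_le (by rw [Fin.le_def]; simp; omega)]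
      exact hS
  · have hall : ∀ w : Fin n, P.part w = P.part z → w ≤ a := by
      intro w hw
      by_contra h
      push_neg at h
      exact hF ⟨w, Finset.mem_filter.mpr ⟨Finset.mem_univ _, hw, h⟩⟩
    have hDne : (Finset.univ.filter (fun w : Fin n => P.part w = P.part z)).Nonempty :=
      ⟨z, Finset.mem_filter.mpr ⟨Finset.mem_univ _, rfl⟩⟩
    set M : Fin n := (Finset.univ.filter (fun w : Fin n => P.part w = P.part z)).max' hDne
      with hMdef
    have hM : P.part M = P.part z :=
      (Finset.mem_filter.mp (Finset.max'_mem _ hDne)).2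
    have hmax : ∀ w : Fin n, P.part w = P.part z → w ≤ M := fun w hw =>
      Finset.le_max' _ w (Finset.mem_filter.mpr ⟨Finset.mem_univ _, hw⟩)
    have hMa : M ≤ a := hall M hM
    have hS : S P M b := by
      intro u v hu1 hu2 hv heq
      rcases hv with hv | hv
      · by_cases hvz : P.part v = P.part z
        · exact absurd (hmax u (heq.trans hvz)) (not_le.2 hu1)
        · have hzv : z < v := by
            rcases lt_or_eq_of_le (show z ≤ v by rw [Fin.le_def, hzval]; omega) with h | h
            · exact h
            · exact absurd (h ▸ rfl : P.part v = P.part z) hvz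
          have hvM : v < M := lt_of_le_of_ne hv (fun h => hvz (h ▸ hM))
          have h2 : P.part z = P.part v := cross hP hzv hvM hu1 hM.symm heq.symm
          exact hvz h2.symm
      · have h1 : v.val < n := v.isLt
        have h2 : b.val < v.val := hv
        omega
    refine H b M hab le_rfl (Or.inl hMa) ?_
    rw [ssym_comm, ssym_of_le (le_trans hMa hab.le)]
    exact hS

/-- Converse, non-wrapping case. -/
lemma easy1 {a b : Fin n} (hab : a < b) (hb1 : b.val + 1 < n)
    (hrel : P.part ⟨a.val + 1, by have := Fin.lt_def.mp hab; omega⟩ = P.part ⟨b.val + 1, hb1⟩) :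
    ∀ u v : Fin n, a < u → u ≤ b → (v ≤ a ∨ b < v) → ¬ Ssym P u v := by
  have hab' : a.val < b.val := hab
  intro u v hu1 hu2 hv hS
  have hu1' : a.val < u.val := hu1
  have hu2' : u.val ≤ b.val := hu2
  rcases hv with hv | hv
  · have hv' : v.val ≤ a.val := hv
    have hvu : v < u := by rw [Fin.lt_def]; omega
    rw [ssym_comm, ssym_of_le hvu.le] at hS
    exact hS ⟨a.val + 1, by omega⟩ ⟨b.val + 1, hb1⟩ (by rw [Fin.lt_def]; simp; omega)
      (by rw [Fin.le_def]; simp; omega) (Or.inr (by rw [Fin.lt_def]; simp; omega)) hrel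
  · have hv' : b.val < v.val := hv
    have huv : u < v := by rw [Fin.lt_def]; omega
    rw [ssym_of_le huv.le] at hS
    exact hS ⟨b.val + 1, hb1⟩ ⟨a.val + 1, by omega⟩ (by rw [Fin.lt_def]; simp; omega)
      (by rw [Fin.le_def]; simp; omega) (Or.inl (by rw [Fin.le_def]; simp; omega)) hrel.symm

/-- Converse, wrapping case. -/
lemma easy2 {a b : Fin n} (hab : a < b) (hb1 : b.val = n - 1)
    (hrel : P.part ⟨a.val + 1, by have h1 := Fin.lt_def.mp hab; have h2 := b.isLt; omega⟩ =
      P.part ⟨0, by have := b.isLt; omega⟩) :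
    ∀ u v : Fin n, a < u → u ≤ b → (v ≤ a ∨ b < v) → ¬ Ssym P u v := by
  have hab' : a.val < b.val := hab
  have hnb := b.isLt
  intro u v hu1 hu2 hv hS
  have hu1' : a.val < u.val := hu1
  rcases hv with hv | hv
  · have hv' : v.val ≤ a.val := hv
    have hvu : v < u := by rw [Fin.lt_def]; omega
    rw [ssym_comm, ssym_of_le hvu.le] at hS
    exact hS ⟨a.val + 1, by omega⟩ ⟨0, by omega⟩ (by rw [Fin.lt_def]; simp; omega)
      (by rw [Fin.le_def]; simp; omega) (Or.inl (by rw [Fin.le_def]; simp)) hrel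
  · have h2 : b.val < v.val := hv
    have := v.isLt
    omega

end Main

section Step

lemma step_lt {n : ℕ} {k : NCP (n + 1) → NCP (n + 1)} (hk : IsKreweras k) (P : NCP (n + 1))
    {a b : Fin (n + 1)} (hab : a < b) :
    (k (k P)).1.part a = (k (k P)).1.part b ↔ P.1.part (a + 1) = P.1.part (b + 1) := by
  have hab' : a.val < b.val := hab
  have hbn : b.val < n + 1 := b.isLt
  have hA : (k (k P)).1.part a = (k (k P)).1.part b ↔
      (∀ u v : Fin (n + 1), a < u → u ≤ b → (v ≤ a ∨ b < v) → ¬ Ssym P.1 u v) := by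
    rw [kchar hk (k P), ssym_of_le hab.le]
    constructor
    · intro h u v h1 h2 h3 hs
      exact h u v h1 h2 h3 ((kchar hk P).2 hs)
    · intro h u v h1 h2 h3 hs
      exact h u v h1 h2 h3 ((kchar hk P).1 hs)
  rw [hA]
  have ha1 : a + 1 = (⟨a.val + 1, by omega⟩ : Fin (n + 1)) :=
    Fin.ext (Fin.val_add_one_of_lt (by rw [Fin.lt_def, Fin.val_last]; omega))
  by_cases hb1 : b.val + 1 < n + 1
  · have hb1' : b + 1 = (⟨b.val + 1, hb1⟩ : Fin (n + 1)) :=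
      Fin.ext (Fin.val_add_one_of_lt (by rw [Fin.lt_def, Fin.val_last]; omega))
    rw [ha1, hb1']
    exact ⟨main1 P.2 hab hb1, easy1 hab hb1⟩
  · have hbl : b = Fin.last n := Fin.ext (by rw [Fin.val_last]; omega)
    have hbv : b.val = (n + 1) - 1 := by omega
    have hb1' : b + 1 = (⟨0, by omega⟩ : Fin (n + 1)) :=
      Fin.ext (show (b + 1).val = 0 by rw [hbl, Fin.last_add_one]; rfl)
    rw [ha1, hb1']
    exact ⟨main2 P.2 hab hbv, easy2 hab hbv⟩

lemma step {n : ℕ} {k : NCP (n + 1) → NCP (n + 1)} (hk : IsKreweras k) (P : NCP (n + 1))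
    (a b : Fin (n + 1)) :
    (k (k P)).1.part a = (k (k P)).1.part b ↔ P.1.part (a + 1) = P.1.part (b + 1) := by
  rcases lt_trichotomy a b with h | rfl | h
  · exact step_lt hk P h
  · exact iff_of_true rfl rfl
  · constructor
    · intro hh
      exact ((step_lt hk P h).1 hh.symm).symm
    · intro hh
      exact ((step_lt hk P h).2 hh.symm).symm

end Step

end KrewerasAux

theorem kreweras_sq_iterate_rotation (n : ℕ) (hn : 0 < n) (k : NCP n → NCP n)
    (hk : IsKreweras k) (P : NCP n) (i : ℕ) (j j' : Fin n) :
    P.1.part j = P.1.part j' ↔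
      (k^[2 * i] P).1.part (j - ⟨i % n, Nat.mod_lt i hn⟩) =
        (k^[2 * i] P).1.part (j' - ⟨i % n, Nat.mod_lt i hn⟩) := by
  obtain ⟨m, rfl⟩ : ∃ m, n = m + 1 := ⟨n - 1, by omega⟩
  open Fin.NatCast in
  have hcast : ∀ l : ℕ, (⟨l % (m + 1), Nat.mod_lt l hn⟩ : Fin (m + 1)) = (l : Fin (m + 1)) :=
    fun l => Fin.ext (by simp)
  rw [hcast]
  induction i with
  | zero =>
    open Fin.NatCast Fin.CommRing in
    simp
  | succ i ih =>
    rw [show (2 : ℕ) * (i + 1) = 2 + 2 * i by ring, Function.iterate_add_apply]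
    rw [show k^[2] (k^[2 * i] P) = k (k (k^[2 * i] P)) from rfl]
    rw [KrewerasAux.step hk (k^[2 * i] P)]
    open Fin.NatCast Fin.CommRing in
    have harith : ∀ x : Fin (m + 1), x - ((i + 1 : ℕ) : Fin (m + 1)) + 1 = x - (i : ℕ) := by
      intro x
      push_cast
      ring
    rw [harith, harith]
    exact ih
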